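/- Let n ≥ 2 and let σ_1,…,σ_{n−1} be the standard Artin generators of B_n. Then the (2n−1)-tuple (σ_1, σ_1, σ_2, …, σ_{n−1}, σ_1, σ_2, …, σ_{n−1}) in (B_n)^{2n−1} (i.e. σ_1 followed by two copies of the sequence σ_1,…,σ_{n−1}) is Hurwitz equivalent to the (2n−1)-tuple (σ_1, σ_2, …, σ_{n−1}, σ_1, σ_2, …, σ_{n−1}, σ_{n−1}) (two copies of the sequence σ_1,…,σ_{n−1} followed by σ_{n−1}). -/

import Mathlib

/-- The braid relators on generators indexed by `Fin n` (so this presents the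
braid group on `n + 1` strands): `σᵢσⱼ = σⱼσᵢ` for `|i - j| > 1` and
`σᵢσᵢ₊₁σᵢ = σᵢ₊₁σᵢσᵢ₊₁`. -/
def braidRels (n : ℕ) : Set (FreeGroup (Fin n)) :=
  {r | ∃ i j : Fin n, i.val + 2 ≤ j.val ∧
        r = FreeGroup.of i * FreeGroup.of j * (FreeGroup.of j * FreeGroup.of i)⁻¹} ∪
  {r | ∃ i j : Fin n, i.val + 1 = j.val ∧
        r = FreeGroup.of i * FreeGroup.of j * FreeGroup.of i *
            (FreeGroup.of j * FreeGroup.of i * FreeGroup.of j)⁻¹}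

/-- The braid group with `n` Artin generators, i.e. the braid group `B_{n+1}`
on `n + 1` strands. -/
abbrev BraidGroup (n : ℕ) : Type := PresentedGroup (braidRels n)

/-- The Artin generators (zero-based: `σ 0, …, σ (n-1)` are the paper's
`σ₁, …, σₙ`). -/
def σ {n : ℕ} (i : Fin n) : BraidGroup n := PresentedGroup.of i

/-- A single Hurwitz move `R_k` (the position `k` is encoded by the prefix `u`):
`(…, a, b, …) ↦ (…, a b a⁻¹, a, …)`. -/
def HurwitzMove {G : Type*} [Group G] (l l' : List G) : Prop :=
  ∃ (u v : List G) (a b : G),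
    l = u ++ a :: b :: v ∧ l' = u ++ (a * b * a⁻¹) :: a :: v

/-- Hurwitz equivalence: finite sequences of Hurwitz moves and their inverses. -/
def HurwitzEquiv {G : Type*} [Group G] : List G → List G → Prop :=
  Relation.EqvGen HurwitzMove

/- ### Auxiliary lemmas -/

lemma braidRel_eq_one {m : ℕ} {r : FreeGroup (Fin m)} (hr : r ∈ braidRels m) :
    PresentedGroup.mk (braidRels m) r = 1 := by
  have : r ∈ Subgroup.normalClosure (braidRels m) := Subgroup.subset_normalClosure hr
  exact (QuotientGroup.eq_one_iff r).mpr this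

lemma σ_comm {m : ℕ} (i j : Fin m) (h : i.val + 2 ≤ j.val) : σ i * σ j = σ j * σ i := by
  have h1 := braidRel_eq_one (m := m) (Or.inl ⟨i, j, h, rfl⟩)
  simp only [map_mul, map_inv] at h1
  have := mul_inv_eq_one.mp h1
  exact this

lemma σ_braid {m : ℕ} (i j : Fin m) (h : i.val + 1 = j.val) :
    σ i * σ j * σ i = σ j * σ i * σ j := by
  have h1 := braidRel_eq_one (m := m) (Or.inr ⟨i, j, h, rfl⟩)
  simp only [map_mul, map_inv] at h1
  exact mul_inv_eq_one.mp h1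

/-- Extended generators indexed by `ℕ` (out-of-range indices give `1`). -/
def σ' {m : ℕ} (i : ℕ) : BraidGroup m :=
  if h : i < m then σ ⟨i, h⟩ else 1

lemma σ'_comm {m : ℕ} {i j : ℕ} (h : i + 2 ≤ j) : (σ' i : BraidGroup m) * σ' j = σ' j * σ' i := by
  unfold σ'
  split_ifs with hi hj hj
  · exact σ_comm ⟨i, hi⟩ ⟨j, hj⟩ h
  · simp
  · simp
  · simp

lemma σ'_braid {m : ℕ} {i j : ℕ} (h : i + 1 = j) (hj : j < m) :
    (σ' i : BraidGroup m) * σ' j * σ' i = σ' j * σ' i * σ' j := by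
  have hi : i < m := by omega
  unfold σ'
  rw [dif_pos hi, dif_pos hj]
  exact σ_braid ⟨i, hi⟩ ⟨j, hj⟩ h

/-- Partial product `δ_k = σ'_0 ⋯ σ'_{k-1}`. -/
def dlt (m : ℕ) : ℕ → BraidGroup m
  | 0 => 1
  | k + 1 => dlt m k * σ' k

lemma σ'_comm_dlt {m : ℕ} {k j : ℕ} (h : k + 1 ≤ j) :
    (σ' j : BraidGroup m) * dlt m k = dlt m k * σ' j := by
  induction k with
  | zero => simp [dlt]
  | succ k ih =>
    have h1 : k + 1 ≤ j := by omega
    have h2 : k + 2 ≤ j := by omega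
    rw [dlt, ← mul_assoc, ih h1, mul_assoc, ← σ'_comm h2, ← mul_assoc]

/-- The key identity: `σ_0 δ_k² = δ_k² σ_{k-1}` for `1 ≤ k ≤ m`. -/
lemma key {m : ℕ} : ∀ k, 1 ≤ k → k ≤ m →
    (σ' 0 : BraidGroup m) * (dlt m k * dlt m k) = dlt m k * dlt m k * σ' (k - 1) := by
  intro k
  induction k with
  | zero => omega
  | succ k ih =>
    intro _ hk
    rcases Nat.eq_zero_or_pos k with hk0 | hk1
    · subst hk0
      simp [dlt]
      group
    · -- k ≥ 1; let a = k-1, b = k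
      have hkm : k ≤ m := by omega
      have IH := ih hk1 hkm
      have hb : k < m := by omega
      obtain ⟨a, ha⟩ : ∃ a, k = a + 1 := ⟨k - 1, by omega⟩
      subst ha
      simp only [Nat.add_sub_cancel] at IH ⊢
      -- dlt (a+2) = dlt (a+1) * σ' (a+1), dlt (a+1) = dlt a * σ' a
      have comm : (σ' (a + 1) : BraidGroup m) * dlt m a = dlt m a * σ' (a + 1) :=
        σ'_comm_dlt (by omega)
      have braid : (σ' a : BraidGroup m) * σ' (a + 1) * σ' a
          = σ' (a + 1) * σ' a * σ' (a + 1) := σ'_braid rfl hb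
      -- rewrite everything in terms of A = dlt m a
      show (σ' 0 : BraidGroup m) * (dlt m (a + 1) * σ' (a + 1) * (dlt m (a + 1) * σ' (a + 1)))
          = dlt m (a + 1) * σ' (a + 1) * (dlt m (a + 1) * σ' (a + 1)) * σ' (a + 1)
      have expand : dlt m (a + 1) * σ' (a + 1) * (dlt m (a + 1) * σ' (a + 1))
          = dlt m (a + 1) * (dlt m a) * (σ' (a + 1) * σ' a * σ' (a + 1)) := by
        show dlt m (a + 1) * σ' (a + 1) * (dlt m a * σ' a * σ' (a + 1)) = _
        rw [show dlt m (a + 1) * σ' (a + 1) * (dlt m a * σ' a * σ' (a + 1))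
            = dlt m (a + 1) * ((σ' (a + 1) * dlt m a) * (σ' a * σ' (a + 1))) by group, comm]
        group
      rw [expand]
      calc (σ' 0 : BraidGroup m)
            * (dlt m (a + 1) * dlt m a * (σ' (a + 1) * σ' a * σ' (a + 1)))
          = σ' 0 * (dlt m (a + 1) * dlt m a * (σ' a * σ' (a + 1) * σ' a)) := by rw [braid]
        _ = (σ' 0 * (dlt m (a + 1) * (dlt m a * σ' a))) * (σ' (a + 1) * σ' a) := by group
        _ = (dlt m (a + 1) * (dlt m a * σ' a) * σ' a) * (σ' (a + 1) * σ' a) := by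
              rw [show dlt m a * σ' a = dlt m (a+1) from rfl, ← mul_assoc, IH,
                show dlt m (a+1) = dlt m a * σ' a from rfl]; group
        _ = dlt m (a + 1) * dlt m a * (σ' a * (σ' a * σ' (a + 1) * σ' a)) := by
              rw [show dlt m (a+1) = dlt m a * σ' a from rfl]; group
        _ = dlt m (a + 1) * dlt m a * (σ' a * (σ' (a + 1) * σ' a * σ' (a + 1))) := by rw [braid]
        _ = dlt m (a + 1) * dlt m a * (σ' a * σ' (a + 1) * σ' a) * σ' (a + 1) := by group
        _ = dlt m (a + 1) * dlt m a * (σ' (a + 1) * σ' a * σ' (a + 1)) * σ' (a + 1) := by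
              rw [braid]

lemma dlt_eq_prod {m : ℕ} (k : ℕ) :
    dlt m k = (((List.range k).map (σ' (m := m))).prod : BraidGroup m) := by
  induction k with
  | zero => simp [dlt]
  | succ k ih =>
    rw [List.range_succ, List.map_append, List.prod_append, dlt, ih]
    simp

lemma prod_ofFn_eq_dlt {m : ℕ} :
    (List.ofFn (fun k : Fin m => σ k)).prod = dlt m m := by
  have hfun : (fun k : Fin m => σ k) = fun k : Fin m => (σ' (m := m)) k.val := by
    funext k
    simp [σ', k.isLt]
  rw [hfun, List.ofFn_eq_map, dlt_eq_prod, ← (show (List.finRange m).map Fin.val = List.range m from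
    List.ext_getElem (by simp) (by simp)), List.map_map]
  rfl

/- Hurwitz machinery -/

lemma hurwitzMove_cons {G : Type*} [Group G] {l l' : List G} (c : G) (h : HurwitzMove l l') :
    HurwitzMove (c :: l) (c :: l') := by
  obtain ⟨u, v, a, b, h1, h2⟩ := h
  exact ⟨c :: u, v, a, b, by simp [h1], by simp [h2]⟩

lemma hurwitzEquiv_cons {G : Type*} [Group G] {l l' : List G} (c : G) (h : HurwitzEquiv l l') :
    HurwitzEquiv (c :: l) (c :: l') := by
  induction h with
  | rel x y hxy => exact Relation.EqvGen.rel _ _ (hurwitzMove_cons c hxy)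
  | refl x => exact Relation.EqvGen.refl _
  | symm x y _ ih => exact Relation.EqvGen.symm _ _ ih
  | trans x y z _ _ ih1 ih2 => exact Relation.EqvGen.trans _ _ _ ih1 ih2

/-- Sliding an element from the front of a list to the back. -/
lemma hurwitz_slide {G : Type*} [Group G] (x : G) (t : List G) :
    HurwitzEquiv (x :: t) (t ++ [t.prod⁻¹ * x * t.prod]) := by
  induction t generalizing x with
  | nil => simp only [List.nil_append, List.prod_nil, inv_one, one_mul, mul_one]; exact Relation.EqvGen.refl _
  | cons a s ih =>
    have step : HurwitzMove (a :: (a⁻¹ * x * a) :: s) (x :: a :: s) := by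
      refine ⟨[], s, a, a⁻¹ * x * a, rfl, ?_⟩
      simp; group
    have h1 : HurwitzEquiv (x :: a :: s) (a :: (a⁻¹ * x * a) :: s) :=
      Relation.EqvGen.symm _ _ (Relation.EqvGen.rel _ _ step)
    have h2 := hurwitzEquiv_cons a (ih (a⁻¹ * x * a))
    have h3 : a :: (s ++ [s.prod⁻¹ * (a⁻¹ * x * a) * s.prod])
        = (a :: s) ++ [(a :: s).prod⁻¹ * x * (a :: s).prod] := by
      simp [List.prod_cons, mul_assoc]
    exact Relation.EqvGen.trans _ _ _ h1 (h3 ▸ h2)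

/-- `(σ₁, σ₁, …, σₙ₋₁, σ₁, …, σₙ₋₁)` is Hurwitz equivalent to
`(σ₁, …, σₙ₋₁, σ₁, …, σₙ₋₁, σₙ₋₁)` (zero-based: `σ₁ = σ 0`,
`σₙ₋₁ = σ (n - 2)`). -/
theorem hurwitz_move_first_gen_through_pi_sq {n : ℕ} (hn : 2 ≤ n) :
    HurwitzEquiv
      (σ (⟨0, by omega⟩ : Fin (n - 1)) ::
        (List.ofFn (fun k : Fin (n - 1) => σ k) ++ List.ofFn (fun k : Fin (n - 1) => σ k)))
      ((List.ofFn (fun k : Fin (n - 1) => σ k) ++ List.ofFn (fun k : Fin (n - 1) => σ k)) ++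
        [σ (⟨n - 2, by omega⟩ : Fin (n - 1))]) := by
  set m := n - 1 with hm
  have hm1 : 1 ≤ m := by omega
  set L : List (BraidGroup m) := List.ofFn (fun k : Fin m => σ k) with hL
  have hprod : L.prod = dlt m m := prod_ofFn_eq_dlt
  have hconj : (L ++ L).prod⁻¹ * σ (⟨0, by omega⟩ : Fin m) * (L ++ L).prod
      = σ (⟨n - 2, by omega⟩ : Fin m) := by
    have h0 : σ (⟨0, by omega⟩ : Fin m) = (σ' 0 : BraidGroup m) := by
      unfold σ'
      rw [dif_pos (by omega : (0 : ℕ) < m)]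
    have hlast : σ (⟨n - 2, by omega⟩ : Fin m) = (σ' (m - 1) : BraidGroup m) := by
      unfold σ'
      rw [dif_pos (by omega : m - 1 < m)]
      congr 1
    rw [List.prod_append, hprod, h0, hlast]
    have hk := key (m := m) m hm1 le_rfl
    rw [show (σ' (m - 1) : BraidGroup m)
        = (dlt m m * dlt m m)⁻¹ * (σ' 0 * (dlt m m * dlt m m)) by rw [hk]; group]
    group
  have := hurwitz_slide (σ (⟨0, by omega⟩ : Fin m)) (L ++ L)
  rwa [hconj] at this
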